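/- Let P ∈ P^2 be a point with all coordinates nonzero and let Q = [q_0:q_1:0] with q_0 q_1 ≠ 0 (so Q ∈ Δ_1 \ Δ_0). Then for all integers m > 1 and n ≥ 1, I(P)^m ⋆ I(Q)^n ≠ I(P ⋆ Q)^{m+n−1}; indeed x_2^n ∈ I(P)^m ⋆ I(Q)^n but x_2^n ∉ I(P ⋆ Q)^{m+n−1}. -/

import Mathlib

open MvPolynomial

noncomputable section

variable {K : Type*} [Field K]

/-- The Hadamard product of two ideals `I, J ⊆ K[x_0,x_1,x_2]`: introduce new variables
`y_0,y_1,y_2` and `z_0,z_1,z_2` (encoded via a sum type), map `I` via `x_i ↦ y_i`, `J` via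
`x_i ↦ z_i`, add the relations `x_i − y_i z_i`, and eliminate `y, z` (i.e. take the
preimage in `K[x_0,x_1,x_2]`). -/
def hadamard (I J : Ideal (MvPolynomial (Fin 3) K)) : Ideal (MvPolynomial (Fin 3) K) :=
  Ideal.comap
    (rename (Sum.inl : Fin 3 → Fin 3 ⊕ (Fin 3 ⊕ Fin 3)))
    (Ideal.map (rename (fun i : Fin 3 => (Sum.inr (Sum.inl i) : Fin 3 ⊕ (Fin 3 ⊕ Fin 3)))) I
      + Ideal.map (rename (fun i : Fin 3 => (Sum.inr (Sum.inr i) : Fin 3 ⊕ (Fin 3 ⊕ Fin 3)))) J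
      + Ideal.span { f | ∃ i : Fin 3,
          f = X (Sum.inl i) - X (Sum.inr (Sum.inl i)) * X (Sum.inr (Sum.inr i)) })

/-- The homogeneous vanishing ideal of the point `P = [p_0:p_1:p_2] ∈ ℙ²`, generated by
the forms `p_j x_i − p_i x_j`. -/
def pointIdeal (p : Fin 3 → K) : Ideal (MvPolynomial (Fin 3) K) :=
  Ideal.span { f | ∃ i j : Fin 3, f = C (p j) * X i - C (p i) * X j }

/-- The irrelevant ideal `𝔪 = ⟨x_0,x_1,x_2⟩` of `K[x_0,x_1,x_2]`. -/
def irrelevantIdeal (K : Type*) [Field K] : Ideal (MvPolynomial (Fin 3) K) :=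
  Ideal.span (Set.range X)

/-- `x₂` belongs to the ideal of any point whose 0-th coordinate is nonzero and whose
last coordinate is zero. -/
lemma X2_mem_pointIdeal (q : Fin 3 → K) (hq0 : q 0 ≠ 0) (hq2 : q 2 = 0) :
    (X 2 : MvPolynomial (Fin 3) K) ∈ pointIdeal q := by
  have hgen : (C (q 0) * X 2 - C (q 2) * X 0 : MvPolynomial (Fin 3) K) ∈ pointIdeal q :=
    Ideal.subset_span ⟨2, 0, rfl⟩
  have key : (X 2 : MvPolynomial (Fin 3) K)
      = C (q 0)⁻¹ * (C (q 0) * X 2 - C (q 2) * X 0) := by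
    rw [hq2]
    rw [map_zero, zero_mul, sub_zero, ← mul_assoc, ← C_mul, inv_mul_cancel₀ hq0, C_1, one_mul]
  rw [key]
  exact Ideal.mul_mem_left _ _ hgen

/-- If the last coordinate of `r` is zero, then evaluating at `(C (r 0), C (r 1), X)` sends
`pointIdeal r` into the ideal `(X) ⊆ K[t]`. -/
lemma map_pointIdeal_le (r : Fin 3 → K) (hr2 : r 2 = 0) :
    Ideal.map (aeval ![Polynomial.C (r 0), Polynomial.C (r 1), Polynomial.X] :
        MvPolynomial (Fin 3) K →ₐ[K] Polynomial K) (pointIdeal r)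
      ≤ Ideal.span {(Polynomial.X : Polynomial K)} := by
  rw [pointIdeal, Ideal.map_span, Ideal.span_le]
  rintro _ ⟨_, ⟨i, j, rfl⟩, rfl⟩
  rw [SetLike.mem_coe, map_sub, map_mul, map_mul, aeval_C, aeval_C,
    aeval_X, aeval_X, Ideal.mem_span_singleton]
  fin_cases i <;> fin_cases j <;>
    simp [hr2, Algebra.algebraMap_eq_smul_one, Polynomial.smul_eq_C_mul] <;>
    ring_nf <;>
    exact dvd_zero _

/-- Let `P ∈ ℙ² \ Δ₁` (all coordinates nonzero) and `Q = [q_0:q_1:0]` with `q_0 q_1 ≠ 0`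
(so `Q ∈ Δ₁ \ Δ₀`). Then for all `m > 1` and `n ≥ 1`,
`x_2^n ∈ I(P)^m ⋆ I(Q)^n` but `x_2^n ∉ I(P ⋆ Q)^{m+n−1}`; in particular
`I(P)^m ⋆ I(Q)^n ≠ I(P ⋆ Q)^{m+n−1}`. -/
theorem hadamard_pow_pointIdeal_one_zero_coord [IsAlgClosed K] (p : Fin 3 → K)
    (hp : ∀ i, p i ≠ 0) (q₀ q₁ : K) (hq : q₀ * q₁ ≠ 0)
    (m n : ℕ) (hm : 1 < m) (hn : 1 ≤ n) :
    (X 2 : MvPolynomial (Fin 3) K) ^ n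
        ∈ hadamard (pointIdeal p ^ m) (pointIdeal ![q₀, q₁, 0] ^ n) ∧
    (X 2 : MvPolynomial (Fin 3) K) ^ n
        ∉ pointIdeal (fun i => p i * ![q₀, q₁, 0] i) ^ (m + n - 1) ∧
    hadamard (pointIdeal p ^ m) (pointIdeal ![q₀, q₁, 0] ^ n)
        ≠ pointIdeal (fun i => p i * ![q₀, q₁, 0] i) ^ (m + n - 1) := by
  have hq0 : q₀ ≠ 0 := fun h => hq (by rw [h, zero_mul])
  -- Part 1: x₂ⁿ is in the Hadamard product.
  have part1 : (X 2 : MvPolynomial (Fin 3) K) ^ n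
      ∈ hadamard (pointIdeal p ^ m) (pointIdeal ![q₀, q₁, 0] ^ n) := by
    rw [hadamard, Ideal.mem_comap, map_pow, rename_X]
    set A := Ideal.map (rename (fun i : Fin 3 => (Sum.inr (Sum.inl i) : Fin 3 ⊕ (Fin 3 ⊕ Fin 3))))
      (pointIdeal p ^ m) with hA
    set B := Ideal.map (rename (fun i : Fin 3 => (Sum.inr (Sum.inr i) : Fin 3 ⊕ (Fin 3 ⊕ Fin 3))))
      (pointIdeal ![q₀, q₁, 0] ^ n) with hB
    set Cid : Ideal (MvPolynomial (Fin 3 ⊕ (Fin 3 ⊕ Fin 3)) K) := Ideal.span { f | ∃ i : Fin 3,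
          f = X (Sum.inl i) - X (Sum.inr (Sum.inl i)) * X (Sum.inr (Sum.inr i)) } with hC
    have hgen : (X (Sum.inl 2) - X (Sum.inr (Sum.inl 2)) * X (Sum.inr (Sum.inr 2)) :
        MvPolynomial (Fin 3 ⊕ (Fin 3 ⊕ Fin 3)) K) ∈ Cid := Ideal.subset_span ⟨2, rfl⟩
    obtain ⟨c, hc⟩ := sub_dvd_pow_sub_pow (X (Sum.inl 2) : MvPolynomial (Fin 3 ⊕ (Fin 3 ⊕ Fin 3)) K)
      (X (Sum.inr (Sum.inl 2)) * X (Sum.inr (Sum.inr 2))) n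
    have hcmem : (X (Sum.inl 2) : MvPolynomial (Fin 3 ⊕ (Fin 3 ⊕ Fin 3)) K) ^ n
        - (X (Sum.inr (Sum.inl 2)) * X (Sum.inr (Sum.inr 2))) ^ n ∈ Cid := by
      rw [hc]; exact Ideal.mul_mem_right _ _ hgen
    have hX2 : (X 2 : MvPolynomial (Fin 3) K) ∈ pointIdeal ![q₀, q₁, 0] :=
      X2_mem_pointIdeal _ (by simpa using hq0) (by simp)
    have hbmem : (X (Sum.inr (Sum.inl 2)) * X (Sum.inr (Sum.inr 2)) :
        MvPolynomial (Fin 3 ⊕ (Fin 3 ⊕ Fin 3)) K) ^ n ∈ B := by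
      have h1 : (X 2 : MvPolynomial (Fin 3) K) ^ n ∈ pointIdeal ![q₀, q₁, 0] ^ n :=
        Ideal.pow_mem_pow hX2 n
      have h2 := Ideal.mem_map_of_mem
        (rename (fun i : Fin 3 => (Sum.inr (Sum.inr i) : Fin 3 ⊕ (Fin 3 ⊕ Fin 3)))) h1
      rw [map_pow, rename_X] at h2
      rw [mul_pow]
      exact Ideal.mul_mem_left _ _ h2
    have key : (X (Sum.inl 2) : MvPolynomial (Fin 3 ⊕ (Fin 3 ⊕ Fin 3)) K) ^ n
        = (X (Sum.inl 2) ^ n - (X (Sum.inr (Sum.inl 2)) * X (Sum.inr (Sum.inr 2))) ^ n)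
          + (X (Sum.inr (Sum.inl 2)) * X (Sum.inr (Sum.inr 2))) ^ n := by ring
    rw [key]
    refine Ideal.add_mem _ ?_ ?_
    · rw [Submodule.add_eq_sup]
      exact Submodule.mem_sup_right hcmem
    · rw [Submodule.add_eq_sup, Submodule.add_eq_sup]
      exact Submodule.mem_sup_left (Submodule.mem_sup_right hbmem)
  -- Part 2: x₂ⁿ is not in the (m+n-1)-st power of the ideal of P⋆Q.
  have part2 : (X 2 : MvPolynomial (Fin 3) K) ^ n
      ∉ pointIdeal (fun i => p i * ![q₀, q₁, 0] i) ^ (m + n - 1) := by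
    intro hmem
    set r : Fin 3 → K := fun i => p i * ![q₀, q₁, 0] i with hr
    have hr2 : r 2 = 0 := by simp [hr]
    set φ : MvPolynomial (Fin 3) K →ₐ[K] Polynomial K :=
      aeval ![Polynomial.C (r 0), Polynomial.C (r 1), Polynomial.X] with hφ
    have h1 : φ ((X 2 : MvPolynomial (Fin 3) K) ^ n)
        ∈ Ideal.map φ (pointIdeal r ^ (m + n - 1)) := Ideal.mem_map_of_mem φ hmem
    rw [Ideal.map_pow] at h1
    have h2 : Ideal.map φ (pointIdeal r) ^ (m + n - 1)
        ≤ Ideal.span {(Polynomial.X : Polynomial K)} ^ (m + n - 1) :=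
      pow_le_pow_left' (map_pointIdeal_le r hr2) _
    have h3 : φ ((X 2 : MvPolynomial (Fin 3) K) ^ n)
        ∈ Ideal.span {(Polynomial.X : Polynomial K) ^ (m + n - 1)} := by
      rw [← Ideal.span_singleton_pow]
      exact h2 h1
    have hφX2 : φ ((X 2 : MvPolynomial (Fin 3) K) ^ n) = Polynomial.X ^ n := by
      rw [map_pow, hφ, aeval_X]; norm_num; rfl
    rw [hφX2, Ideal.mem_span_singleton] at h3
    have hdeg := Polynomial.natDegree_le_of_dvd h3 (pow_ne_zero n Polynomial.X_ne_zero)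
    rw [Polynomial.natDegree_pow, Polynomial.natDegree_pow, Polynomial.natDegree_X,
      mul_one, mul_one] at hdeg
    omega
  refine ⟨part1, part2, fun heq => part2 (heq ▸ part1)⟩
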